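/- Let β, L > 0, x_0 ∈ [0,1] and h > 0. Let K : ℝ → [0,∞) be bounded with maximum K_max, vanishing outside (−1/2, 1/2), and set m_1(x) = L·h^β·K((x − x_0)/h). Let X_1, …, X_n be i.i.d. random variables with density μ on [0,1] bounded by μ_0, and let p_ζ be a probability density on [−π, π] (extended 2π-periodically) satisfying ∫ p_ζ(u)·log( p_ζ(u)/p_ζ(u + y) ) du ≤ p∗·y² for all |y| ≤ y_0, where p∗, y_0 > 0. Assume L·h^β·K_max ≤ y_0. Then E[ Σ_{i=1}^n ∫ p_ζ(y)·log( p_ζ(y) / p_ζ(y − m_1(X_i)) ) dy ] ≤ p∗·L²·K_max²·μ_0·n·h^{2β+1}. -/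

import Mathlib

open Real Set MeasureTheory ProbabilityTheory

/-- Kullback–Leibler bound for the two-hypotheses reduction: with
`m₁(x) = L h^β K((x - x₀)/h)`, a design density bounded by `μ₀`, and an error density `p_ζ`
satisfying the quadratic KL-shift condition, one has
`E[Σᵢ ∫ p_ζ(y) log (p_ζ(y)/p_ζ(y - m₁(Xᵢ))) dy] ≤ p∗ L² K_max² μ₀ n h^{2β+1}`. -/
theorem stmt16 {Ω : Type*} [MeasurableSpace Ω] (P : Measure Ω) [IsProbabilityMeasure P]
    (β L : ℝ) (hβ : 0 < β) (hL : 0 < L)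
    (x0 : ℝ) (hx0 : x0 ∈ Set.Icc (0:ℝ) 1) (h : ℝ) (hh : 0 < h)
    (K : ℝ → ℝ) (Kmax : ℝ) (hKmeas : Measurable K)
    (hKnn : ∀ x, 0 ≤ K x) (hKle : ∀ x, K x ≤ Kmax) (hKmax : ∃ x, K x = Kmax)
    (hKsupp : ∀ x : ℝ, x ∉ Set.Ioo (-(1/2) : ℝ) (1/2) → K x = 0)
    (n : ℕ) (X : Fin n → Ω → ℝ) (hXmeas : ∀ i, Measurable (X i))
    (hindep : iIndepFun X P)
    (mudens : ℝ → ℝ) (mu0 : ℝ) (hmudensnn : ∀ x, 0 ≤ mudens x)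
    (hmu0 : ∀ x, mudens x ≤ mu0)
    (hmusupp : ∀ x : ℝ, x ∉ Set.Icc (0:ℝ) 1 → mudens x = 0)
    (hlaw : ∀ i, Measure.map (X i) P
      = volume.withDensity (fun x => ENNReal.ofReal (mudens x)))
    (pz : ℝ → ℝ) (hpzmeas : Measurable pz)
    (hper : ∀ u, pz (u + 2 * Real.pi) = pz u) (hpznn : ∀ u, 0 ≤ pz u)
    (hpzint : (∫ u in (-Real.pi)..Real.pi, pz u) = 1)
    (pstar y0 : ℝ) (hpstar : 0 < pstar) (hy0 : 0 < y0)
    (hKL : ∀ y : ℝ, |y| ≤ y0 →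
      (∫ u in (-Real.pi)..Real.pi, pz u * Real.log (pz u / pz (u + y))) ≤ pstar * y ^ 2)
    (hsmall : L * h ^ β * Kmax ≤ y0) :
    (∫ ω, (∑ i : Fin n, ∫ y in (-Real.pi)..Real.pi,
        pz y * Real.log (pz y / pz (y - L * h ^ β * K ((X i ω - x0) / h)))) ∂P)
      ≤ pstar * L ^ 2 * Kmax ^ 2 * mu0 * n * h ^ (2 * β + 1) := by
  have hKmaxnn : 0 ≤ Kmax := le_trans (hKnn 0) (hKle 0)
  have hmu0nn : 0 ≤ mu0 := le_trans (hmudensnn 0) (hmu0 0)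
  have hhb : 0 < h ^ β := Real.rpow_pos_of_pos hh β
  set m1 : ℝ → ℝ := fun x => L * h ^ β * K ((x - x0) / h) with hm1
  have hm1nn : ∀ x, 0 ≤ m1 x := fun x =>
    mul_nonneg (mul_nonneg hL.le hhb.le) (hKnn _)
  have hm1le : ∀ x, m1 x ≤ L * h ^ β * Kmax := fun x =>
    mul_le_mul_of_nonneg_left (hKle _) (mul_nonneg hL.le hhb.le)
  -- pointwise KL bound
  have hpt : ∀ x : ℝ, (∫ y in (-Real.pi)..Real.pi,
      pz y * Real.log (pz y / pz (y - m1 x))) ≤ pstar * (m1 x) ^ 2 := by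
    intro x
    have habs : |(-(m1 x))| ≤ y0 := by
      rw [abs_neg, abs_of_nonneg (hm1nn x)]
      exact le_trans (hm1le x) hsmall
    have h1 := hKL (-(m1 x)) habs
    simp only [neg_sq, ← sub_eq_add_neg] at h1
    exact h1
  set C : ℝ := pstar * (L * h ^ β * Kmax) ^ 2 with hC
  have hCnn : 0 ≤ C := mul_nonneg hpstar.le (sq_nonneg _)
  set φ : ℝ → ℝ := fun x => pstar * (m1 x) ^ 2 with hφ
  have hφnn : ∀ x, 0 ≤ φ x := fun x => mul_nonneg hpstar.le (sq_nonneg _)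
  have hφle : ∀ x, φ x ≤ C := fun x =>
    mul_le_mul_of_nonneg_left
      (pow_le_pow_left₀ (hm1nn x) (hm1le x) 2) hpstar.le
  have hφmeas : Measurable φ := by
    apply measurable_const.mul
    exact ((measurable_const.mul
      (hKmeas.comp ((measurable_id.sub_const x0).div_const h))).pow measurable_const)
  have hφsupp : ∀ x : ℝ, x ∉ Set.Ioo (x0 - h / 2) (x0 + h / 2) → φ x = 0 := by
    intro x hx
    have : (x - x0) / h ∉ Set.Ioo (-(1/2) : ℝ) (1/2) := by
      intro ⟨h1, h2⟩
      apply hx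
      constructor
      · nlinarith [(lt_div_iff₀ hh).1 h1]
      · nlinarith [(div_lt_iff₀ hh).1 h2]
    simp [hφ, hm1, hKsupp _ this]
  -- integrability of φ ∘ X i
  have hXφmeas : ∀ i, Measurable fun ω => φ (X i ω) :=
    fun i => hφmeas.comp (hXmeas i)
  have hGint : ∀ i : Fin n, Integrable (fun ω => φ (X i ω)) P := by
    intro i
    refine (integrable_const C).mono' (hXφmeas i).aestronglyMeasurable ?_
    filter_upwards with ω
    rw [Real.norm_eq_abs, abs_of_nonneg (hφnn _)]
    exact hφle _
  -- lintegral bound for each i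
  have hGbound : ∀ i : Fin n, (∫ ω, φ (X i ω) ∂P) ≤ mu0 * (C * h) := by
    intro i
    have hF : Measurable fun x => ENNReal.ofReal (φ x) :=
      ENNReal.measurable_ofReal.comp hφmeas
    have h1 : (∫ ω, φ (X i ω) ∂P)
        = (∫⁻ ω, ENNReal.ofReal (φ (X i ω)) ∂P).toReal := by
      rw [integral_eq_lintegral_of_nonneg_ae (Filter.Eventually.of_forall fun ω => hφnn _)
        (hXφmeas i).aestronglyMeasurable]
    have h2 : (∫⁻ ω, ENNReal.ofReal (φ (X i ω)) ∂P)
        = ∫⁻ x, ENNReal.ofReal (φ x) ∂(Measure.map (X i) P) :=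
      (lintegral_map hF (hXmeas i)).symm
    have hmle : Measure.map (X i) P ≤ (ENNReal.ofReal mu0) • (volume : Measure ℝ) := by
      rw [hlaw i, ← withDensity_const]
      exact withDensity_mono (Filter.Eventually.of_forall fun x =>
        ENNReal.ofReal_le_ofReal (hmu0 x))
    have h3 : (∫⁻ x, ENNReal.ofReal (φ x) ∂(Measure.map (X i) P))
        ≤ ENNReal.ofReal mu0 * ∫⁻ x, ENNReal.ofReal (φ x) := by
      calc (∫⁻ x, ENNReal.ofReal (φ x) ∂(Measure.map (X i) P))
          ≤ ∫⁻ x, ENNReal.ofReal (φ x) ∂((ENNReal.ofReal mu0) • (volume : Measure ℝ)) :=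
            lintegral_mono' hmle le_rfl
        _ = ENNReal.ofReal mu0 * ∫⁻ x, ENNReal.ofReal (φ x) := lintegral_smul_measure _ _
    have h4 : (∫⁻ x, ENNReal.ofReal (φ x)) ≤ ENNReal.ofReal C * ENNReal.ofReal h := by
      have hmeasI : MeasurableSet (Set.Ioo (x0 - h / 2) (x0 + h / 2)) := measurableSet_Ioo
      calc (∫⁻ x, ENNReal.ofReal (φ x))
          ≤ ∫⁻ x, (Set.Ioo (x0 - h / 2) (x0 + h / 2)).indicator
              (fun _ => ENNReal.ofReal C) x := by
            apply lintegral_mono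
            intro x
            by_cases hx : x ∈ Set.Ioo (x0 - h / 2) (x0 + h / 2)
            · simp only [Set.indicator_of_mem hx]
              exact ENNReal.ofReal_le_ofReal (hφle x)
            · simp [Set.indicator_of_notMem hx, hφsupp x hx]
        _ = ENNReal.ofReal C * volume (Set.Ioo (x0 - h / 2) (x0 + h / 2)) :=
            lintegral_indicator_const hmeasI _
        _ = ENNReal.ofReal C * ENNReal.ofReal h := by
            rw [Real.volume_Ioo]
            congr 1
            ring_nf
    rw [h1, h2]
    refine ENNReal.toReal_le_of_le_ofReal
      (mul_nonneg hmu0nn (mul_nonneg hCnn hh.le)) ?_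
    calc (∫⁻ x, ENNReal.ofReal (φ x) ∂(Measure.map (X i) P))
        ≤ ENNReal.ofReal mu0 * (ENNReal.ofReal C * ENNReal.ofReal h) :=
          le_trans h3 (mul_le_mul_right h4 _)
      _ = ENNReal.ofReal (mu0 * (C * h)) := by
          rw [← ENNReal.ofReal_mul hCnn, ← ENNReal.ofReal_mul hmu0nn]
  -- compare the two integrals
  have hptsum : ∀ ω, (∑ i : Fin n, ∫ y in (-Real.pi)..Real.pi,
      pz y * Real.log (pz y / pz (y - m1 (X i ω))))
      ≤ ∑ i : Fin n, φ (X i ω) :=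
    fun ω => Finset.sum_le_sum fun i _ => hpt (X i ω)
  have hGsumint : Integrable (fun ω => ∑ i : Fin n, φ (X i ω)) P :=
    integrable_finset_sum _ fun i _ => hGint i
  have key : (∫ ω, (∑ i : Fin n, ∫ y in (-Real.pi)..Real.pi,
      pz y * Real.log (pz y / pz (y - m1 (X i ω)))) ∂P)
      ≤ ∫ ω, (∑ i : Fin n, φ (X i ω)) ∂P := by
    by_cases hInt : Integrable (fun ω => ∑ i : Fin n, ∫ y in (-Real.pi)..Real.pi,
        pz y * Real.log (pz y / pz (y - m1 (X i ω)))) P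
    · exact integral_mono hInt hGsumint hptsum
    · rw [integral_undef hInt]
      exact integral_nonneg fun ω => Finset.sum_nonneg fun i _ => hφnn _
  have hpow : (h ^ β) ^ 2 * h = h ^ (2 * β + 1) := by
    calc (h ^ β) ^ 2 * h = h ^ (β * 2) * h ^ (1 : ℝ) := by
          rw [← Real.rpow_natCast (h ^ β) 2, ← Real.rpow_mul hh.le, Real.rpow_one]
          norm_num
      _ = h ^ (β * 2 + 1) := (Real.rpow_add hh _ _).symm
      _ = h ^ (2 * β + 1) := by ring_nf
  calc (∫ ω, (∑ i : Fin n, ∫ y in (-Real.pi)..Real.pi,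
        pz y * Real.log (pz y / pz (y - m1 (X i ω)))) ∂P)
      ≤ ∫ ω, (∑ i : Fin n, φ (X i ω)) ∂P := key
    _ = ∑ i : Fin n, ∫ ω, φ (X i ω) ∂P := integral_finset_sum _ fun i _ => hGint i
    _ ≤ ∑ _i : Fin n, mu0 * (C * h) := Finset.sum_le_sum fun i _ => hGbound i
    _ = (n : ℝ) * (mu0 * (C * h)) := by
        rw [Finset.sum_const, Finset.card_univ, Fintype.card_fin, nsmul_eq_mul]
    _ = pstar * L ^ 2 * Kmax ^ 2 * mu0 * n * h ^ (2 * β + 1) := by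
        rw [hC, ← hpow]; ring
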